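/- arXiv:1904.06515 — 9 statements merged into one kernel-verified Lean document; each statement's English description precedes it below -/
import Mathlib

section
/- Let (g,[·,·],φ) be a regular Hom-Lie algebra. Define a new bracket on g by [x,y]_Lie := [φ⁻¹(x), φ⁻¹(y)] for all x,y ∈ g. Then (g,[·,·]_Lie) is a Lie algebra; in particular [·,·]_Lie is bilinear, skew-symmetric, and satisfies the Jacobi identity [x,[y,z]_Lie]_Lie + [y,[z,x]_Lie]_Lie + [z,[x,y]_Lie]_Lie = 0 for all x,y,z ∈ g. -/
/-- For a regular Hom-Lie algebra `(g, b, φ)`, the bracket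
`[x,y]_Lie := b (φ⁻¹ x) (φ⁻¹ y)` makes `g` a Lie algebra: it is bilinear,
skew-symmetric and satisfies the Jacobi identity. -/
theorem stmt0 {g : Type*} [AddCommGroup g] [Module ℝ g]
    (b : g →ₗ[ℝ] g →ₗ[ℝ] g) (φ : g ≃ₗ[ℝ] g)
    (hskew : ∀ x y : g, b x y = - b y x)
    (hmul : ∀ x y : g, φ (b x y) = b (φ x) (φ y))
    (hjac : ∀ x y z : g,
      b (φ x) (b y z) + b (φ y) (b z x) + b (φ z) (b x y) = 0) :
    (∀ (a : ℝ) (x x' y : g),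
      b (φ.symm (a • x + x')) (φ.symm y)
        = a • b (φ.symm x) (φ.symm y) + b (φ.symm x') (φ.symm y)) ∧
    (∀ (a : ℝ) (x y y' : g),
      b (φ.symm x) (φ.symm (a • y + y'))
        = a • b (φ.symm x) (φ.symm y) + b (φ.symm x) (φ.symm y')) ∧
    (∀ x y : g, b (φ.symm x) (φ.symm y) = - b (φ.symm y) (φ.symm x)) ∧
    (∀ x y z : g,
      b (φ.symm x) (φ.symm (b (φ.symm y) (φ.symm z)))
        + b (φ.symm y) (φ.symm (b (φ.symm z) (φ.symm x)))
        + b (φ.symm z) (φ.symm (b (φ.symm x) (φ.symm y))) = 0) := by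
  have hsymm : ∀ x y : g, φ.symm (b x y) = b (φ.symm x) (φ.symm y) := by
    intro x y
    apply φ.injective
    rw [φ.apply_symm_apply, hmul, φ.apply_symm_apply, φ.apply_symm_apply]
  refine ⟨?_, ?_, ?_, ?_⟩
  · intro a x x' y; simp
  · intro a x y y'; simp
  · intro x y; exact hskew _ _
  · intro x y z
    rw [hsymm, hsymm, hsymm]
    have h := hjac (φ.symm (φ.symm x)) (φ.symm (φ.symm y)) (φ.symm (φ.symm z))
    simpa [φ.apply_symm_apply] using h
end

section
/- Let (G,⋄,e,Φ) be a regular Hom-group. Then: (i) Φ(e) = e; (ii) for each x ∈ G the inverse is unique, i.e., if x ⋄ u = u ⋄ x = e and x ⋄ v = v ⋄ x = e then u = v; (iii) (x ⋄ y)⁻¹ = y⁻¹ ⋄ x⁻¹ for all x,y ∈ G. -/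
/-- In a regular Hom-group `(G,⋄,e,Φ)` (with a chosen Hom-inverse
map `inv`): (i) `Φ(e) = e`; (ii) Hom-inverses are unique;
(iii) `(x ⋄ y)⁻¹ = y⁻¹ ⋄ x⁻¹`. -/
theorem stmt5 {G : Type*} (op : G → G → G) (Φ : G ≃ G) (e : G) (inv : G → G)
    (hmulΦ : ∀ x y : G, Φ (op x y) = op (Φ x) (Φ y))
    (hassoc : ∀ x y z : G, op (Φ x) (op y z) = op (op x y) (Φ z))
    (hunit : ∀ x : G, op x e = Φ x ∧ op e x = Φ x)
    (huniq : ∀ e' : G, (∀ x : G, op x e' = Φ x ∧ op e' x = Φ x) → e' = e)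
    (hinv : ∀ x : G, op x (inv x) = e ∧ op (inv x) x = e) :
    Φ e = e ∧
    (∀ x u v : G, op x u = e → op u x = e → op x v = e → op v x = e → u = v) ∧
    (∀ x y : G, inv (op x y) = op (inv y) (inv x)) := by
  -- (i) Φ e = e
  have hΦe : Φ e = e := by
    apply huniq
    intro x
    constructor
    · have := hmulΦ (Φ.symm x) e
      rw [(hunit (Φ.symm x)).1, Φ.apply_symm_apply] at this
      exact this.symm
    · have := hmulΦ e (Φ.symm x)
      rw [(hunit (Φ.symm x)).2, Φ.apply_symm_apply] at this
      exact this.symm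
  have hΦse : Φ.symm e = e := by
    apply Φ.injective
    rw [Φ.apply_symm_apply, hΦe]
  have hmulΦs : ∀ a b : G, Φ.symm (op a b) = op (Φ.symm a) (Φ.symm b) := by
    intro a b
    apply Φ.injective
    rw [hmulΦ, Φ.apply_symm_apply, Φ.apply_symm_apply, Φ.apply_symm_apply]
  -- (ii) uniqueness of inverses
  have uniq : ∀ x u v : G, op x u = e → op u x = e → op x v = e → op v x = e → u = v := by
    intro x u v hxu hux hxv hvx
    have h := hassoc u x v
    rw [hxv, hux, (hunit (Φ u)).1, (hunit (Φ v)).2] at h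
    exact Φ.injective (Φ.injective h)
  refine ⟨hΦe, uniq, ?_⟩
  intro x y
  -- key computations
  have key1 : op (op x y) (op (inv y) (inv x)) = e := by
    have h1 : op y (op (Φ.symm (inv y)) (Φ.symm (inv x))) = Φ (inv x) := by
      have := hassoc (Φ.symm y) (Φ.symm (inv y)) (Φ.symm (inv x))
      rw [Φ.apply_symm_apply, Φ.apply_symm_apply, ← hmulΦs y (inv y), (hinv y).1, hΦse,
        (hunit (inv x)).2] at this
      rw [this]
    have h2 := hassoc x y (op (Φ.symm (inv y)) (Φ.symm (inv x)))
    rw [h1, ← hmulΦ, (hinv x).1, hΦe, hmulΦ, Φ.apply_symm_apply, Φ.apply_symm_apply] at h2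
    exact h2.symm
  have key2 : op (op (inv y) (inv x)) (op x y) = e := by
    have h1 : op (inv x) (op (Φ.symm x) (Φ.symm y)) = Φ y := by
      have := hassoc (Φ.symm (inv x)) (Φ.symm x) (Φ.symm y)
      rw [Φ.apply_symm_apply, Φ.apply_symm_apply, ← hmulΦs (inv x) x, (hinv x).2, hΦse,
        (hunit y).2] at this
      rw [this]
    have h2 := hassoc (inv y) (inv x) (op (Φ.symm x) (Φ.symm y))
    rw [h1, ← hmulΦ, (hinv y).2, hΦe, hmulΦ, Φ.apply_symm_apply, Φ.apply_symm_apply] at h2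
    exact h2.symm
  exact uniq (op x y) (inv (op x y)) (op (inv y) (inv x))
    (hinv (op x y)).1 (hinv (op x y)).2 key1 key2
end

section
/- Let A be a commutative real algebra and σ : A → A an algebra automorphism. If x and y are (σ,σ)-derivations of A, then both φ(x) := σ⁻¹∘x∘σ and [x,y]_σ := σ⁻¹∘x∘σ⁻¹∘y∘σ − σ⁻¹∘y∘σ⁻¹∘x∘σ are again (σ,σ)-derivations of A. -/
/-- If `σ` is an algebra automorphism of a commutative real
algebra `A` and `x, y` are `(σ,σ)`-derivations of `A`, then
`φ(x) := σ⁻¹∘x∘σ` and `[x,y]_σ := σ⁻¹∘x∘σ⁻¹∘y∘σ − σ⁻¹∘y∘σ⁻¹∘x∘σ`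
are again `(σ,σ)`-derivations of `A`. -/
theorem stmt8 {A : Type*} [CommRing A] [Algebra ℝ A] (σ : A ≃ₐ[ℝ] A)
    (x y : A →ₗ[ℝ] A)
    (hx : ∀ f g : A, x (f * g) = x f * σ g + σ f * x g)
    (hy : ∀ f g : A, y (f * g) = y f * σ g + σ f * y g) :
    (∀ f g : A,
      σ.symm (x (σ (f * g)))
        = σ.symm (x (σ f)) * σ g + σ f * σ.symm (x (σ g))) ∧
    (∀ f g : A,
      σ.symm (x (σ.symm (y (σ (f * g))))) - σ.symm (y (σ.symm (x (σ (f * g)))))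
        = (σ.symm (x (σ.symm (y (σ f)))) - σ.symm (y (σ.symm (x (σ f))))) * σ g
          + σ f * (σ.symm (x (σ.symm (y (σ g)))) - σ.symm (y (σ.symm (x (σ g)))))) := by
  constructor
  · intro f g
    simp [map_mul, hx, AlgEquiv.symm_apply_apply]
  · intro f g
    simp only [map_mul, hx, hy, map_add, AlgEquiv.symm_apply_apply, AlgEquiv.apply_symm_apply]
    ring
end

section
/- Let (G,⋄,e,Φ) be a regular Hom-group. Define a new product on G by a · b := Φ⁻¹(a ⋄ b) for all a,b ∈ G. Then (G,·,e) is a group: the product · is associative, e is a two-sided identity for ·, and the Hom-inverse a⁻¹ of each a ∈ G is a two-sided inverse for ·. -/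
/-- If `(G,⋄,e,Φ)` is a regular Hom-group, then
`a · b := Φ⁻¹(a ⋄ b)` makes `(G,·,e)` a group: `·` is associative, `e` is a
two-sided identity and the Hom-inverse is a two-sided inverse for `·`. -/
theorem stmt10 {G : Type*} (op : G → G → G) (Φ : G ≃ G) (e : G) (inv : G → G)
    (hmulΦ : ∀ x y : G, Φ (op x y) = op (Φ x) (Φ y))
    (hassoc : ∀ x y z : G, op (Φ x) (op y z) = op (op x y) (Φ z))
    (hunit : ∀ x : G, op x e = Φ x ∧ op e x = Φ x)
    (huniq : ∀ e' : G, (∀ x : G, op x e' = Φ x ∧ op e' x = Φ x) → e' = e)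
    (hinv : ∀ x : G, op x (inv x) = e ∧ op (inv x) x = e) :
    (∀ a b c : G,
      Φ.symm (op (Φ.symm (op a b)) c) = Φ.symm (op a (Φ.symm (op b c)))) ∧
    (∀ a : G, Φ.symm (op a e) = a ∧ Φ.symm (op e a) = a) ∧
    (∀ a : G, Φ.symm (op a (inv a)) = e ∧ Φ.symm (op (inv a) a) = e) := by
  have hmulΦ' : ∀ x y : G, Φ.symm (op x y) = op (Φ.symm x) (Φ.symm y) := by
    intro x y
    apply Φ.injective
    rw [Φ.apply_symm_apply, hmulΦ, Φ.apply_symm_apply, Φ.apply_symm_apply]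
  have hΦe : Φ e = e := by
    apply huniq
    intro x
    constructor
    · have := hmulΦ x e
      rw [(hunit x).1] at this
      calc op x (Φ e) = op (Φ (Φ.symm x)) (Φ e) := by rw [Φ.apply_symm_apply]
        _ = Φ (op (Φ.symm x) e) := (hmulΦ _ _).symm
        _ = Φ (Φ (Φ.symm x)) := by rw [(hunit _).1]
        _ = Φ x := by rw [Φ.apply_symm_apply]
    · calc op (Φ e) x = op (Φ e) (Φ (Φ.symm x)) := by rw [Φ.apply_symm_apply]
        _ = Φ (op e (Φ.symm x)) := (hmulΦ _ _).symm
        _ = Φ (Φ (Φ.symm x)) := by rw [(hunit _).2]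
        _ = Φ x := by rw [Φ.apply_symm_apply]
  have hΦe' : Φ.symm e = e := by
    apply Φ.injective; rw [Φ.apply_symm_apply, hΦe]
  refine ⟨?_, ?_, ?_⟩
  · intro a b c
    congr 1
    rw [hmulΦ' a b, hmulΦ' b c]
    have := hassoc (Φ.symm a) (Φ.symm b) (Φ.symm c)
    rw [Φ.apply_symm_apply, Φ.apply_symm_apply] at this
    exact this.symm
  · intro a
    constructor
    · rw [(hunit a).1, Φ.symm_apply_apply]
    · rw [(hunit a).2, Φ.symm_apply_apply]
  · intro a
    constructor
    · rw [(hinv a).1, hΦe']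
    · rw [(hinv a).2, hΦe']
end

section
/- Let (G,⋄,e,Φ) be a regular Hom-group and define Ad̃ : G × G → G by Ad̃(a,x) := Φ⁻¹(a ⋄ x) ⋄ a⁻¹, written a ⊙ x := Ad̃(a,x). Then Ad̃ is an action of (G,⋄,e,Φ) on G with respect to Φ: (1) e ⊙ x = Φ(x) for all x ∈ G; (2) (a ⋄ b) ⊙ x = Φ(a) ⊙ (Φ⁻¹(Φ(b) ⊙ x)) for all a,b,x ∈ G. -/
/-- In a regular Hom-group `(G,⋄,e,Φ)` the map
`a ⊙ x := Ad̃(a,x) := Φ⁻¹(a ⋄ x) ⋄ a⁻¹` is an action of `G` on itself with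
respect to `Φ`: (1) `e ⊙ x = Φ(x)`;
(2) `(a ⋄ b) ⊙ x = Φ(a) ⊙ (Φ⁻¹(Φ(b) ⊙ x))`. -/
theorem stmt12 {G : Type*} (op : G → G → G) (Φ : G ≃ G) (e : G) (inv : G → G)
    (hmulΦ : ∀ x y : G, Φ (op x y) = op (Φ x) (Φ y))
    (hassoc : ∀ x y z : G, op (Φ x) (op y z) = op (op x y) (Φ z))
    (hunit : ∀ x : G, op x e = Φ x ∧ op e x = Φ x)
    (huniq : ∀ e' : G, (∀ x : G, op x e' = Φ x ∧ op e' x = Φ x) → e' = e)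
    (hinv : ∀ x : G, op x (inv x) = e ∧ op (inv x) x = e) :
    (∀ x : G, op (Φ.symm (op e x)) (inv e) = Φ x) ∧
    (∀ a b x : G,
      op (Φ.symm (op (op a b) x)) (inv (op a b))
        = op (Φ.symm (op (Φ a)
            (Φ.symm (op (Φ.symm (op (Φ b) x)) (inv (Φ b)))))) (inv (Φ a))) := by
  -- Φ e = e
  have h1 : ∀ x, op x (Φ e) = Φ x := fun x => by
    have h := hmulΦ (Φ.symm x) e
    rw [(hunit (Φ.symm x)).1, Φ.apply_symm_apply] at h
    exact h.symm
  have h2 : ∀ x, op (Φ e) x = Φ x := fun x => by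
    have h := hmulΦ e (Φ.symm x)
    rw [(hunit (Φ.symm x)).2, Φ.apply_symm_apply] at h
    exact h.symm
  have hΦe : Φ e = e := huniq _ (fun x => ⟨h1 x, h2 x⟩)
  -- make G a group with x * y = Φ.symm (op x y)
  letI : Group G :=
  { mul := fun x y => Φ.symm (op x y)
    one := e
    inv := inv
    mul_assoc := fun x y z => Φ.injective <| Φ.injective <| by
      show Φ (Φ (Φ.symm (op (Φ.symm (op x y)) z)))
          = Φ (Φ (Φ.symm (op x (Φ.symm (op y z)))))
      rw [Φ.apply_symm_apply, Φ.apply_symm_apply, hmulΦ, hmulΦ,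
        Φ.apply_symm_apply, Φ.apply_symm_apply, hassoc]
    one_mul := fun x => by
      show Φ.symm (op e x) = x
      rw [(hunit x).2, Φ.symm_apply_apply]
    mul_one := fun x => by
      show Φ.symm (op x e) = x
      rw [(hunit x).1, Φ.symm_apply_apply]
    inv_mul_cancel := fun x => by
      show Φ.symm (op (inv x) x) = e
      rw [(hinv x).2, Equiv.symm_apply_eq, hΦe] }
  have hop : ∀ x y : G, op x y = Φ (x * y) := fun x y =>
    (Φ.apply_symm_apply _).symm
  have hΦm : ∀ x y : G, Φ (x * y) = Φ x * Φ y := fun x y => by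
    show Φ (x * y) = Φ.symm (op (Φ x) (Φ y))
    rw [← hmulΦ]
    show Φ (Φ.symm (op x y)) = Φ.symm (Φ (op x y))
    rw [Φ.apply_symm_apply, Φ.symm_apply_apply]
  have hΦsm : ∀ x y : G, Φ.symm (x * y) = Φ.symm x * Φ.symm y := fun x y =>
    Φ.injective <| by rw [Φ.apply_symm_apply, hΦm, Φ.apply_symm_apply, Φ.apply_symm_apply]
  have hΦinv : ∀ x : G, Φ x⁻¹ = (Φ x)⁻¹ := fun x =>
    eq_inv_of_mul_eq_one_left (by rw [← hΦm, inv_mul_cancel]; exact hΦe)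
  have hinv' : ∀ x : G, inv x = x⁻¹ := fun _ => rfl
  have he1 : e = (1 : G) := rfl
  constructor
  · intro x
    rw [(hunit x).2, Φ.symm_apply_apply, hinv', he1, inv_one, ← he1]
    exact (hunit x).1
  · intro a b x
    simp only [hop, hΦm, hΦsm, hinv', hΦinv, mul_inv_rev, Φ.symm_apply_apply, Φ.apply_symm_apply]
    group
end

section
/- Let E be a real Banach space, β a continuous linear automorphism of E, and A,B continuous linear endomorphisms of E. Define Ω(t,s) := β ∘ exp(s·(A∘β⁻¹)) ∘ exp(t·(B∘β⁻¹)) ∘ exp(−s·(A∘β⁻¹)) ∘ exp(−t·(B∘β⁻¹)) for t,s ∈ ℝ. Then the iterated derivative (d/dt)|_{t=0} (d/ds)|_{s=0} Ω(t,s) equals [A,B]_β := β∘A∘β⁻¹∘B∘β⁻¹ − β∘B∘β⁻¹∘A∘β⁻¹. -/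
open NormedSpace

section aux

variable {E : Type*} [NormedAddCommGroup E] [NormedSpace ℝ E] [CompleteSpace E]

lemma aux_hasDerivAt_exp (X : E →L[ℝ] E) :
    HasDerivAt (fun s : ℝ => exp (s • X)) X 0 := by
  simpa using hasDerivAt_exp_smul_const X (0 : ℝ)

lemma aux_hasDerivAt_exp_neg (X : E →L[ℝ] E) :
    HasDerivAt (fun s : ℝ => exp ((-s) • X)) (-X) 0 := by
  have h := hasDerivAt_exp_smul_const (-X) (0 : ℝ)
  simp only [neg_smul, smul_neg] at h ⊢
  simpa using h

end aux

/-- For a continuous linear automorphism `β` of a real Banach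
space `E` and `A, B ∈ L(E)`, with
`Ω(t,s) := β ∘ exp(s·(A∘β⁻¹)) ∘ exp(t·(B∘β⁻¹)) ∘ exp(−s·(A∘β⁻¹)) ∘ exp(−t·(B∘β⁻¹))`,
the iterated derivative `(d/dt)|₀ (d/ds)|₀ Ω(t,s)` equals
`[A,B]_β = β∘A∘β⁻¹∘B∘β⁻¹ − β∘B∘β⁻¹∘A∘β⁻¹`. -/
theorem stmt14 {E : Type*} [NormedAddCommGroup E] [NormedSpace ℝ E]
    [CompleteSpace E] (β : E ≃L[ℝ] E) (A B : E →L[ℝ] E) :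
    deriv (fun t : ℝ => deriv (fun s : ℝ =>
        (β : E →L[ℝ] E)
          * exp (s • (A * (β.symm : E →L[ℝ] E)))
          * exp (t • (B * (β.symm : E →L[ℝ] E)))
          * exp ((-s) • (A * (β.symm : E →L[ℝ] E)))
          * exp ((-t) • (B * (β.symm : E →L[ℝ] E)))) 0) 0
      = (β : E →L[ℝ] E) * A * (β.symm : E →L[ℝ] E) * B * (β.symm : E →L[ℝ] E)
        - (β : E →L[ℝ] E) * B * (β.symm : E →L[ℝ] E) * A
          * (β.symm : E →L[ℝ] E) := by
  set b : E →L[ℝ] E := (β : E →L[ℝ] E) with hb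
  set A' : E →L[ℝ] E := A * (β.symm : E →L[ℝ] E) with hA'
  set B' : E →L[ℝ] E := B * (β.symm : E →L[ℝ] E) with hB'
  have key : ∀ t : ℝ, deriv (fun s : ℝ =>
      b * exp (s • A') * exp (t • B') * exp ((-s) • A')
        * exp ((-t) • B')) 0
      = b * A' * exp (t • B') * exp ((-t) • B')
        - b * exp (t • B') * A' * exp ((-t) • B') := by
    intro t
    have h : HasDerivAt (fun s : ℝ =>
        b * exp (s • A') * exp (t • B') * exp ((-s) • A')
          * exp ((-t) • B'))
        (b * A' * exp (t • B') * exp ((-t) • B')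
          - b * exp (t • B') * A' * exp ((-t) • B')) 0 := by
      have h1 := ((((hasDerivAt_const (0:ℝ) b).mul (aux_hasDerivAt_exp A')).mul
        (hasDerivAt_const (0:ℝ) (exp (t • B')))).mul
        (aux_hasDerivAt_exp_neg A')).mul
        (hasDerivAt_const (0:ℝ) (exp ((-t) • B')))
      simp only [zero_smul, neg_zero, exp_zero, mul_one, one_mul, zero_mul,
        mul_zero, add_zero, zero_add, mul_neg] at h1
      refine h1.congr_deriv ?_
      simp only [Pi.mul_apply, zero_smul, exp_zero, mul_one, one_mul]
      noncomm_ring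
    exact h.deriv
  simp only [key]
  have hC : HasDerivAt (fun t : ℝ => exp (t • B')) B' 0 := aux_hasDerivAt_exp B'
  have hD : HasDerivAt (fun t : ℝ => exp ((-t) • B')) (-B') 0 :=
    aux_hasDerivAt_exp_neg B'
  have h2 : HasDerivAt (fun t : ℝ =>
      b * A' * exp (t • B') * exp ((-t) • B')
        - b * exp (t • B') * A' * exp ((-t) • B'))
      (b * A' * B' - b * B' * A') 0 := by
    have hL := (((hasDerivAt_const (0:ℝ) (b * A')).mul hC).mul hD)
    have hR := ((((hasDerivAt_const (0:ℝ) b).mul hC).mul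
      (hasDerivAt_const (0:ℝ) A')).mul hD)
    have := hL.sub hR
    simp only [zero_smul, neg_zero, exp_zero, mul_one, one_mul, zero_mul,
      mul_zero, add_zero, zero_add, mul_neg] at this
    refine this.congr_deriv ?_
    simp only [Pi.mul_apply, zero_smul, exp_zero, mul_one, one_mul]
    noncomm_ring
  rw [h2.deriv, hA', hB', hb]
  noncomm_ring
end

section
/- Let (g,[·,·],φ) be a regular Hom-Lie algebra. If D, D₁, D₂ are derivations of (g,[·,·],φ), then Ad_φ(D) := φ∘D∘φ⁻¹ and [D₁,D₂]_φ := φ∘D₁∘φ⁻¹∘D₂∘φ⁻¹ − φ∘D₂∘φ⁻¹∘D₁∘φ⁻¹ are again derivations of (g,[·,·],φ). Hence (Der(g), [·,·]_φ, Ad_φ) is a Hom-Lie subalgebra of the regular Hom-Lie algebra (gl(g), [·,·]_φ, Ad_φ). -/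
/-- A derivation of a regular Hom-Lie algebra `(g, b, φ)`:
`D[x,y] = [φ(x), (φ⁻¹∘D∘φ)(y)] + [(φ⁻¹∘D∘φ)(x), φ(y)]`. -/
def IsHomLieDer {g : Type*} [AddCommGroup g] [Module ℝ g]
    (b : g →ₗ[ℝ] g →ₗ[ℝ] g) (φ : g ≃ₗ[ℝ] g) (D : g →ₗ[ℝ] g) : Prop :=
  ∀ x y : g, D (b x y) = b (φ x) (φ.symm (D (φ y))) + b (φ.symm (D (φ x))) (φ y)

/-- `Ad_φ(D) := φ∘D∘φ⁻¹`. -/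
def adPhi {g : Type*} [AddCommGroup g] [Module ℝ g]
    (φ : g ≃ₗ[ℝ] g) (D : g →ₗ[ℝ] g) : g →ₗ[ℝ] g :=
  φ.toLinearMap ∘ₗ D ∘ₗ φ.symm.toLinearMap

/-- `[D₁,D₂]_φ := φ∘D₁∘φ⁻¹∘D₂∘φ⁻¹ − φ∘D₂∘φ⁻¹∘D₁∘φ⁻¹`. -/
def brPhi {g : Type*} [AddCommGroup g] [Module ℝ g]
    (φ : g ≃ₗ[ℝ] g) (D₁ D₂ : g →ₗ[ℝ] g) : g →ₗ[ℝ] g :=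
  φ.toLinearMap ∘ₗ D₁ ∘ₗ φ.symm.toLinearMap ∘ₗ D₂ ∘ₗ φ.symm.toLinearMap
    - φ.toLinearMap ∘ₗ D₂ ∘ₗ φ.symm.toLinearMap ∘ₗ D₁ ∘ₗ φ.symm.toLinearMap

private lemma symm_mul {g : Type*} [AddCommGroup g] [Module ℝ g]
    (b : g →ₗ[ℝ] g →ₗ[ℝ] g) (φ : g ≃ₗ[ℝ] g)
    (hmul : ∀ x y : g, φ (b x y) = b (φ x) (φ y)) (x y : g) :
    φ.symm (b x y) = b (φ.symm x) (φ.symm y) := by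
  apply φ.injective
  rw [hmul]
  simp

private lemma der_key {g : Type*} [AddCommGroup g] [Module ℝ g]
    (b : g →ₗ[ℝ] g →ₗ[ℝ] g) (φ : g ≃ₗ[ℝ] g)
    (hmul : ∀ x y : g, φ (b x y) = b (φ x) (φ y))
    (D : g →ₗ[ℝ] g) (hD : IsHomLieDer b φ D) (x y : g) :
    φ (D (φ.symm (b x y))) = b (φ x) (D y) + b (D x) (φ y) := by
  rw [symm_mul b φ hmul, hD]
  simp [hmul, map_add]

private lemma der_key' {g : Type*} [AddCommGroup g] [Module ℝ g]
    (b : g →ₗ[ℝ] g →ₗ[ℝ] g) (φ : g ≃ₗ[ℝ] g)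
    (hmul : ∀ x y : g, φ (b x y) = b (φ x) (φ y))
    (D : g →ₗ[ℝ] g) (hD : IsHomLieDer b φ D) (x y : g) :
    D (φ.symm (b x y)) = b x (φ.symm (D y)) + b (φ.symm (D x)) y := by
  rw [symm_mul b φ hmul, hD]
  simp

/-- If `D, D₁, D₂` are derivations of a regular Hom-Lie algebra
`(g, b, φ)`, then `Ad_φ(D)` and `[D₁,D₂]_φ` are again derivations; hence
`(Der(g), [·,·]_φ, Ad_φ)` is a Hom-Lie subalgebra of `(gl(g), [·,·]_φ, Ad_φ)`. -/
theorem stmt15 {g : Type*} [AddCommGroup g] [Module ℝ g]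
    (b : g →ₗ[ℝ] g →ₗ[ℝ] g) (φ : g ≃ₗ[ℝ] g)
    (hskew : ∀ x y : g, b x y = - b y x)
    (hmul : ∀ x y : g, φ (b x y) = b (φ x) (φ y))
    (hjac : ∀ x y z : g,
      b (φ x) (b y z) + b (φ y) (b z x) + b (φ z) (b x y) = 0)
    (D D₁ D₂ : g →ₗ[ℝ] g)
    (hD : IsHomLieDer b φ D) (hD₁ : IsHomLieDer b φ D₁)
    (hD₂ : IsHomLieDer b φ D₂) :
    IsHomLieDer b φ (adPhi φ D) ∧ IsHomLieDer b φ (brPhi φ D₁ D₂) := by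
  constructor
  · intro x y
    simp only [adPhi, LinearMap.comp_apply, LinearEquiv.coe_coe,
      LinearEquiv.symm_apply_apply]
    exact der_key b φ hmul D hD x y
  · intro x y
    simp only [brPhi, LinearMap.sub_apply, LinearMap.comp_apply, LinearEquiv.coe_coe,
      LinearEquiv.symm_apply_apply]
    rw [der_key' b φ hmul D₂ hD₂ x y, der_key' b φ hmul D₁ hD₁ x y]
    simp only [map_add, der_key b φ hmul D₁ hD₁, der_key b φ hmul D₂ hD₂,
      LinearEquiv.apply_symm_apply, map_sub, LinearMap.sub_apply,
      LinearEquiv.symm_apply_apply]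
    abel
end

section
/- Let (g,[·,·],φ) be a regular Hom-Lie algebra and D : g → g a linear map. Then D is a derivation of (g,[·,·],φ) if and only if D∘φ⁻¹ is a derivation of the Lie algebra (g,[·,·]_Lie) with bracket [x,y]_Lie := [φ⁻¹(x), φ⁻¹(y)]; that is, D[x,y] = [φ(x), (φ⁻¹∘D∘φ)(y)] + [(φ⁻¹∘D∘φ)(x), φ(y)] holds for all x,y ∈ g if and only if (D∘φ⁻¹)([x,y]_Lie) = [(D∘φ⁻¹)(x), y]_Lie + [x, (D∘φ⁻¹)(y)]_Lie holds for all x,y ∈ g. -/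
/-- A linear map `D` is a derivation of a regular Hom-Lie
algebra `(g, b, φ)` if and only if `D∘φ⁻¹` is a derivation of the Lie algebra
`(g, [·,·]_Lie)` with `[x,y]_Lie := b (φ⁻¹ x) (φ⁻¹ y)`. -/
theorem stmt16 {g : Type*} [AddCommGroup g] [Module ℝ g]
    (b : g →ₗ[ℝ] g →ₗ[ℝ] g) (φ : g ≃ₗ[ℝ] g)
    (hskew : ∀ x y : g, b x y = - b y x)
    (hmul : ∀ x y : g, φ (b x y) = b (φ x) (φ y))
    (hjac : ∀ x y z : g,
      b (φ x) (b y z) + b (φ y) (b z x) + b (φ z) (b x y) = 0)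
    (D : g →ₗ[ℝ] g) :
    (∀ x y : g,
      D (b x y) = b (φ x) (φ.symm (D (φ y))) + b (φ.symm (D (φ x))) (φ y))
    ↔ (∀ x y : g,
        D (φ.symm (b (φ.symm x) (φ.symm y)))
          = b (φ.symm (D (φ.symm x))) (φ.symm y)
            + b (φ.symm x) (φ.symm (D (φ.symm y)))) := by
  have hmul' : ∀ x y : g, φ.symm (b x y) = b (φ.symm x) (φ.symm y) := by
    intro x y
    apply φ.injective
    rw [hmul, φ.apply_symm_apply, φ.apply_symm_apply, φ.apply_symm_apply]
  constructor
  · intro h x y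
    rw [hmul', h]
    simp [φ.apply_symm_apply, add_comm]
  · intro h x y
    have := h (φ (φ x)) (φ (φ y))
    simp only [φ.symm_apply_apply] at this
    rw [← hmul, φ.symm_apply_apply] at this
    rw [this]
    abel
end

section
/- Let g be a finite-dimensional real normed vector space and (g,[·,·],φ) a regular Hom-Lie algebra whose bracket is bilinear and whose structure map φ is a (continuous) linear automorphism. Let D : g → g be a linear map. Then D is a derivation of (g,[·,·],φ) if and only if for every t ∈ ℝ the map Hexp(tD) := φ ∘ exp(t·(D∘φ⁻¹)) is an automorphism of (g,[·,·],φ), i.e., Hexp(tD)[x,y] = [(φ⁻¹∘Hexp(tD)∘φ)(x), (φ⁻¹∘Hexp(tD)∘φ)(y)] for all x,y ∈ g and all t ∈ ℝ. Here exp denotes the exponential map on the algebra of linear endomorphisms of g. -/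
open NormedSpace

section Aux

variable {g : Type*} [NormedAddCommGroup g] [NormedSpace ℝ g] [CompleteSpace g]

lemma aux_exp_apply_deriv (E : g →L[ℝ] g) (w : g) (t : ℝ) :
    HasDerivAt (fun s : ℝ => exp (s • E) w) (E (exp (t • E) w)) t := by
  have h1 := hasDerivAt_exp_smul_const' (𝕂 := ℝ) E t
  have h2 := h1.clm_apply (hasDerivAt_const t w)
  simpa [ContinuousLinearMap.mul_apply] using h2

lemma aux_exp_inv (E : g →L[ℝ] g) (t : ℝ) :
    exp (t • E) * exp (t • (-E)) = 1 := by
  let +nondep : NormedAlgebra ℚ (g →L[ℝ] g) := NormedAlgebra.restrictScalars ℚ ℝ _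
  rw [smul_neg, ← exp_add_of_commute ((Commute.refl (t • E)).neg_right)]
  simp

lemma aux_fwd (C : g →L[ℝ] g →L[ℝ] g) (E : g →L[ℝ] g)
    (hd : ∀ a c : g, E (C a c) = C (E a) c + C a (E c)) (t : ℝ) (u v : g) :
    exp (t • E) (C u v) = C (exp (t • E) u) (exp (t • E) v) := by
  set h : ℝ → g := fun s => exp (s • (-E)) (C (exp (s • E) u) (exp (s • E) v)) with hh
  have h0 : ∀ s : ℝ, HasDerivAt h 0 s := by
    intro s
    have hf := aux_exp_apply_deriv E u s
    have hg := aux_exp_apply_deriv E v s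
    have hQ := (C.hasFDerivAt.comp_hasDerivAt s hf).clm_apply hg
    have hP : HasDerivAt (fun s : ℝ => exp (s • (-E))) (exp (s • (-E)) * (-E)) s :=
      hasDerivAt_exp_smul_const (-E) s
    have key := hP.clm_apply hQ
    have e : (exp (s • (-E)) * (-E)) (C (exp (s • E) u) (exp (s • E) v))
        + exp (s • (-E)) (C (E (exp (s • E) u)) (exp (s • E) v)
            + C (exp (s • E) u) (E (exp (s • E) v))) = 0 := by
      rw [ContinuousLinearMap.mul_apply, ← map_add, ← hd]
      simp
    simp only [Function.comp_def] at key
    rw [e] at key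
    exact key
  have hdiff : Differentiable ℝ h := fun s => (h0 s).differentiableAt
  have hcz : ∀ s, deriv h s = 0 := fun s => (h0 s).deriv
  have hc := is_const_of_deriv_eq_zero hdiff hcz t 0
  have h0v : h 0 = C u v := by simp [hh]
  rw [h0v] at hc
  -- hc : exp (t • (-E)) (C (exp u) (exp v)) = C u v
  have := congrArg (fun w => exp (t • E) w) hc
  rw [← ContinuousLinearMap.mul_apply, aux_exp_inv, ContinuousLinearMap.one_apply] at this
  exact this.symm

lemma aux_bwd (C : g →L[ℝ] g →L[ℝ] g) (E : g →L[ℝ] g) (u v : g)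
    (h : ∀ t : ℝ, exp (t • E) (C u v) = C (exp (t • E) u) (exp (t • E) v)) :
    E (C u v) = C (E u) v + C u (E v) := by
  have hL : HasDerivAt (fun t : ℝ => exp (t • E) (C u v)) (E (C u v)) 0 := by
    simpa using aux_exp_apply_deriv E (C u v) 0
  have hR : HasDerivAt (fun t : ℝ => C (exp (t • E) u) (exp (t • E) v))
      (C (E u) v + C u (E v)) 0 := by
    have := (C.hasFDerivAt.comp_hasDerivAt 0 (aux_exp_apply_deriv E u 0)).clm_apply
      (aux_exp_apply_deriv E v 0)
    simpa using this
  have hfun : (fun t : ℝ => exp (t • E) (C u v))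
      = fun t : ℝ => C (exp (t • E) u) (exp (t • E) v) := funext h
  rw [hfun] at hL
  exact hL.unique hR

end Aux

/-- Let `g` be a finite-dimensional real normed space carrying a
regular Hom-Lie algebra structure `(g, b, φ)` with `φ` a continuous linear
automorphism, and let `D : g → g` be a (continuous) linear map. Then `D` is a
derivation of `(g, b, φ)` if and only if for every `t ∈ ℝ` the map
`Hexp(tD) := φ ∘ exp(t·(D∘φ⁻¹))` is an automorphism of `(g, b, φ)`, i.e.
`Hexp(tD)[x,y] = [(φ⁻¹∘Hexp(tD)∘φ)(x), (φ⁻¹∘Hexp(tD)∘φ)(y)]` for all `x, y`. -/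
theorem stmt18 {g : Type*} [NormedAddCommGroup g] [NormedSpace ℝ g]
    [FiniteDimensional ℝ g]
    (b : g →ₗ[ℝ] g →ₗ[ℝ] g) (φ : g ≃L[ℝ] g)
    (hskew : ∀ x y : g, b x y = - b y x)
    (hmul : ∀ x y : g, φ (b x y) = b (φ x) (φ y))
    (hjac : ∀ x y z : g,
      b (φ x) (b y z) + b (φ y) (b z x) + b (φ z) (b x y) = 0)
    (D : g →L[ℝ] g) :
    (∀ x y : g,
      D (b x y) = b (φ x) (φ.symm (D (φ y))) + b (φ.symm (D (φ x))) (φ y))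
    ↔ (∀ (t : ℝ) (x y : g),
        ((φ : g →L[ℝ] g) * exp (t • (D * (φ.symm : g →L[ℝ] g)))) (b x y)
          = b (φ.symm (((φ : g →L[ℝ] g)
                * exp (t • (D * (φ.symm : g →L[ℝ] g)))) (φ x)))
              (φ.symm (((φ : g →L[ℝ] g)
                * exp (t • (D * (φ.symm : g →L[ℝ] g)))) (φ y)))) := by
  set E : g →L[ℝ] g := D * (φ.symm : g →L[ℝ] g) with hEdef
  have hEapp : ∀ z : g, E z = D (φ.symm z) := fun z => rfl
  have hEφ : ∀ z : g, E (φ z) = D z := fun z => by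
    rw [hEapp, φ.symm_apply_apply]
  have hsymmb : ∀ a c : g, φ.symm (b a c) = b (φ.symm a) (φ.symm c) := by
    intro a c
    apply φ.injective
    rw [hmul]
    simp
  let B : g →L[ℝ] g →L[ℝ] g := LinearMap.toContinuousLinearMap
    { toFun := fun x => LinearMap.toContinuousLinearMap (b x),
      map_add' := by intro x y; ext z; simp,
      map_smul' := by intro c x; ext z; simp }
  let C : g →L[ℝ] g →L[ℝ] g :=
    (ContinuousLinearMap.compL ℝ g g g (φ.symm : g →L[ℝ] g)).comp B
  have hC : ∀ x y : g, C x y = φ.symm (b x y) := by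
    intro x y
    simp [C, B]
  constructor
  · intro hder t x y
    simp only [ContinuousLinearMap.mul_apply, ContinuousLinearEquiv.coe_coe,
      ContinuousLinearEquiv.symm_apply_apply]
    have hA : ∀ a c : g, E (b a c) = b a (φ.symm (D c)) + b (φ.symm (D a)) c := by
      intro a c
      have h1 : D (b (φ.symm a) (φ.symm c))
          = b a (φ.symm (D c)) + b (φ.symm (D a)) c := by
        simpa using hder (φ.symm a) (φ.symm c)
      rw [hEapp, hsymmb]
      exact h1
    have hd' : ∀ a c : g, E (C a c) = C (E a) c + C a (E c) := by
      intro a c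
      rw [hC, hC, hC, hsymmb a c, hA, ← hEapp c, ← hEapp a, ← hsymmb, ← hsymmb, add_comm]
    have key := aux_fwd C E hd' t (φ x) (φ y)
    have e1 : C (φ x) (φ y) = b x y := by
      rw [hC, ← hmul, φ.symm_apply_apply]
    rw [e1, hC] at key
    rw [key, φ.apply_symm_apply]
  · intro hauto x y
    simp only [ContinuousLinearMap.mul_apply, ContinuousLinearEquiv.coe_coe,
      ContinuousLinearEquiv.symm_apply_apply] at hauto
    have h2 : ∀ (u v : g) (t : ℝ),
        exp (t • E) (C u v) = C (exp (t • E) u) (exp (t • E) v) := by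
      intro u v t
      have h1 := hauto t (φ.symm u) (φ.symm v)
      rw [φ.apply_symm_apply, φ.apply_symm_apply] at h1
      rw [hC, hC, hsymmb u v, ← h1, φ.symm_apply_apply]
    have h3 := aux_bwd C E (φ (φ x)) (φ (φ y)) (fun t => h2 (φ (φ x)) (φ (φ y)) t)
    have e0 : C (φ (φ x)) (φ (φ y)) = φ (b x y) := by
      rw [hC, ← hmul, φ.symm_apply_apply, ← hmul]
    rw [e0, hEφ (b x y), hEφ (φ x), hEφ (φ y)] at h3
    have e1 : C (D (φ x)) (φ (φ y)) = b (φ.symm (D (φ x))) (φ y) := by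
      rw [hC, hsymmb, φ.symm_apply_apply]
    have e2 : C (φ (φ x)) (D (φ y)) = b (φ x) (φ.symm (D (φ y))) := by
      rw [hC, hsymmb, φ.symm_apply_apply]
    rw [e1, e2, add_comm] at h3
    exact h3
end
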